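/- For 1 < p < 2, 0 < b ≤ 1, and x ∈ (0,1), the curvature κ(x) = (p−1) b x^{p−2}(1−x^p)^{1/p−2} / (1 + b² x^{2p−2}(1−x^p)^{2/p−2})^{3/2} of the curve y = b(1−x^p)^{1/p} satisfies κ(x) ≥ (p−1) b · 2^{1/p − 1/2}. -/

import Mathlib

open Real

lemma aux_concave (s ξ : ℝ) (hs0 : 0 < s) (hs1 : s < 1) (hξ0 : 0 < ξ) (hξ1 : ξ < 1) :
    ξ ^ s + (1 - ξ) ^ s ≤ 2 ^ (1 - s) := by
  have h2ξ : (2 * ξ : ℝ) ∈ Set.Ici (0:ℝ) := Set.mem_Ici.2 (by nlinarith)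
  have h2ξ' : (2 * (1 - ξ) : ℝ) ∈ Set.Ici (0:ℝ) := Set.mem_Ici.2 (by nlinarith)
  obtain ⟨-, hcc⟩ := Real.concaveOn_rpow (p := s) hs0.le hs1.le
  have h := hcc h2ξ h2ξ' (a := 1/2) (b := 1/2) (by norm_num) (by norm_num) (by norm_num)
  simp only [smul_eq_mul] at h
  have harg : (1:ℝ)/2 * (2 * ξ) + 1/2 * (2 * (1 - ξ)) = 1 := by ring
  rw [harg, Real.one_rpow] at h
  rw [Real.mul_rpow (by norm_num) hξ0.le, Real.mul_rpow (by norm_num) (by linarith)] at h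
  have h2s : (0:ℝ) < (2:ℝ) ^ s := Real.rpow_pos_of_pos (by norm_num) s
  have h1s : (2:ℝ) ^ (1 - s) = 2 / (2:ℝ) ^ s := by
    rw [Real.rpow_sub (by norm_num), Real.rpow_one]
  rw [h1s, le_div_iff₀ h2s]
  nlinarith [h2s]

lemma key_bound (b ξ β : ℝ) (hb0 : 0 < b) (hb1 : b ≤ 1) (hξ0 : 0 < ξ) (hξ1 : ξ < 1)
    (hβ0 : 0 < β) (hβ1 : β < 1) :
    (ξ * (1 - ξ)) ^ β * ((1 - ξ) ^ (1 - β) + b ^ 2 * ξ ^ (1 - β)) ^ ((3:ℝ)/2)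
      ≤ 2 ^ (-β / 2) := by
  have hc : (0:ℝ) < 1 - ξ := by linarith
  have hξs : (0:ℝ) < ξ ^ (1 - β) := Real.rpow_pos_of_pos hξ0 _
  have hcs : (0:ℝ) < (1 - ξ) ^ (1 - β) := Real.rpow_pos_of_pos hc _
  have h4 : ((1:ℝ)/4) = (2:ℝ) ^ (-2:ℝ) := by
    rw [show (-2:ℝ) = ((-2:ℤ):ℝ) by norm_num, Real.rpow_intCast]
    norm_num
  -- first factor ≤ 2^(-2β)
  have h1 : (ξ * (1 - ξ)) ^ β ≤ 2 ^ ((-2:ℝ) * β) := by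
    have hle : ξ * (1 - ξ) ≤ 1/4 := by nlinarith [sq_nonneg (ξ - 1/2)]
    calc (ξ * (1 - ξ)) ^ β ≤ ((1:ℝ)/4) ^ β :=
          Real.rpow_le_rpow (by positivity) hle hβ0.le
      _ = ((2:ℝ) ^ (-2:ℝ)) ^ β := by rw [h4]
      _ = 2 ^ ((-2:ℝ) * β) := (Real.rpow_mul (by norm_num) _ _).symm
  -- second factor ≤ 2^(3β/2)
  have h2 : ((1 - ξ) ^ (1 - β) + b ^ 2 * ξ ^ (1 - β)) ^ ((3:ℝ)/2)
      ≤ 2 ^ (β * (3/2)) := by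
    have hM : (1 - ξ) ^ (1 - β) + b ^ 2 * ξ ^ (1 - β) ≤ 2 ^ β := by
      have hb2 : b ^ 2 ≤ 1 := by nlinarith
      have hcon := aux_concave (1 - β) ξ (by linarith) (by linarith) hξ0 hξ1
      have h1β : (1:ℝ) - (1 - β) = β := by ring
      rw [h1β] at hcon
      nlinarith
    calc ((1 - ξ) ^ (1 - β) + b ^ 2 * ξ ^ (1 - β)) ^ ((3:ℝ)/2)
        ≤ ((2:ℝ) ^ β) ^ ((3:ℝ)/2) :=
          Real.rpow_le_rpow (by positivity) hM (by norm_num)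
      _ = 2 ^ (β * (3/2)) := (Real.rpow_mul (by norm_num) _ _).symm
  calc (ξ * (1 - ξ)) ^ β * ((1 - ξ) ^ (1 - β) + b ^ 2 * ξ ^ (1 - β)) ^ ((3:ℝ)/2)
      ≤ 2 ^ ((-2:ℝ) * β) * 2 ^ (β * (3/2)) :=
        mul_le_mul h1 h2 (by positivity) (by positivity)
    _ = 2 ^ (-β / 2) := by
        rw [← Real.rpow_add (by norm_num)]
        congr 1
        ring

theorem lp_ellipse_curvature_lower (p b x : ℝ) (hp1 : 1 < p) (hp2 : p < 2)
    (hb : 0 < b) (hb1 : b ≤ 1) (hx : x ∈ Set.Ioo (0 : ℝ) 1) :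
    (p - 1) * b * 2 ^ (1 / p - 1 / 2 : ℝ)
      ≤ (p - 1) * b * x ^ (p - 2) * (1 - x ^ p) ^ (1 / p - 2) /
        (1 + b ^ 2 * x ^ (2 * p - 2) * (1 - x ^ p) ^ (2 / p - 2)) ^ ((3 : ℝ) / 2) := by
  obtain ⟨hx0, hx1⟩ := hx
  have hp0 : (0:ℝ) < p := by linarith
  set β : ℝ := 2 / p - 1 with hβdef
  have hβ0 : 0 < β := by
    have : 1 < 2 / p := (one_lt_div hp0).2 (by linarith)
    simp only [hβdef]; linarith
  have hβ1 : β < 1 := by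
    have : 2 / p < 2 := by
      rw [div_lt_iff₀ hp0]; nlinarith
    simp only [hβdef]; linarith
  have hξ0 : (0:ℝ) < x ^ p := Real.rpow_pos_of_pos hx0 p
  have hξ1 : x ^ p < 1 := Real.rpow_lt_one hx0.le hx1 hp0
  have hc : (0:ℝ) < 1 - x ^ p := by linarith
  -- rewrite powers of x in terms of ξ = x^p
  have hA : x ^ (p - 2) = (x ^ p) ^ (-β) := by
    rw [← Real.rpow_mul hx0.le]
    congr 1
    rw [hβdef]
    field_simp
    ring
  have hB : x ^ (2 * p - 2) = (x ^ p) ^ (1 - β) := by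
    rw [← Real.rpow_mul hx0.le]
    congr 1
    rw [hβdef]
    field_simp
    ring
  have hE1 : (1 / p - 2 : ℝ) = (β - 3) / 2 := by rw [hβdef]; ring
  have hE2 : (2 / p - 2 : ℝ) = -(1 - β) := by rw [hβdef]; ring
  have hE3 : (1 / p - 1 / 2 : ℝ) = β / 2 := by rw [hβdef]; ring
  rw [hA, hB, hE1, hE2, hE3]
  set ξ : ℝ := x ^ p with hξdef
  set c : ℝ := 1 - ξ with hcdef
  set M : ℝ := c ^ (1 - β) + b ^ 2 * ξ ^ (1 - β) with hMdef
  have hM : 0 < M := by positivity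
  -- denominator base
  have hden : 1 + b ^ 2 * ξ ^ (1 - β) * c ^ (-(1 - β)) = M * c ^ (-(1 - β)) := by
    have hcc : c ^ (1 - β) * c ^ (-(1 - β)) = 1 := by
      rw [← Real.rpow_add hc]; norm_num
    rw [hMdef]; rw [add_mul, hcc]
  rw [hden, Real.mul_rpow hM.le (Real.rpow_nonneg hc.le _), ← Real.rpow_mul hc.le]
  rw [le_div_iff₀ (by positivity)]
  -- key inequality
  have hKey := key_bound b ξ β hb hb1 hξ0 hξ1 hβ0 hβ1
  rw [← hcdef, ← hMdef] at hKey
  have hsplit : (ξ * c) ^ β = ξ ^ β * c ^ β := Real.mul_rpow hξ0.le hc.le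
  have hT : 2 ^ (β / 2) * M ^ ((3:ℝ)/2) * c ^ (-(1 - β) * (3 / 2))
      ≤ ξ ^ (-β) * c ^ ((β - 3) / 2) := by
    have hξβ : (0:ℝ) < ξ ^ β := Real.rpow_pos_of_pos hξ0 _
    have hcβ : (0:ℝ) < c ^ β := Real.rpow_pos_of_pos hc _
    calc 2 ^ (β / 2) * M ^ ((3:ℝ)/2) * c ^ (-(1 - β) * (3 / 2))
        = (2 ^ (β / 2) * c ^ (-(1 - β) * (3 / 2)) * (ξ ^ β * c ^ β)⁻¹)
            * ((ξ * c) ^ β * M ^ ((3:ℝ)/2)) := by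
          rw [hsplit]; field_simp
      _ ≤ (2 ^ (β / 2) * c ^ (-(1 - β) * (3 / 2)) * (ξ ^ β * c ^ β)⁻¹)
            * (2 ^ (-β / 2)) := by
          apply mul_le_mul_of_nonneg_left hKey (by positivity)
      _ = ξ ^ (-β) * c ^ ((β - 3) / 2) := by
          rw [mul_inv, ← Real.rpow_neg hξ0.le, ← Real.rpow_neg hc.le]
          have h2 : (2:ℝ) ^ (β / 2) * 2 ^ (-β / 2) = 1 := by
            rw [← Real.rpow_add (by norm_num)]
            rw [show β / 2 + -β / 2 = 0 by ring, Real.rpow_zero]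
          have hc2 : c ^ (-β) * c ^ (-(1 - β) * (3 / 2)) = c ^ ((β - 3) / 2) := by
            rw [← Real.rpow_add hc]; congr 1; ring
          calc 2 ^ (β / 2) * c ^ (-(1 - β) * (3 / 2)) * (ξ ^ (-β) * c ^ (-β)) * 2 ^ (-β / 2)
              = ((2:ℝ) ^ (β / 2) * 2 ^ (-β / 2)) * ξ ^ (-β)
                  * (c ^ (-β) * c ^ (-(1 - β) * (3 / 2))) := by ring
            _ = ξ ^ (-β) * c ^ ((β - 3) / 2) := by rw [h2, hc2]; ring
  calc (p - 1) * b * 2 ^ (β / 2) * (M ^ ((3:ℝ)/2) * c ^ (-(1 - β) * (3 / 2)))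
      = (p - 1) * b * (2 ^ (β / 2) * M ^ ((3:ℝ)/2) * c ^ (-(1 - β) * (3 / 2))) := by ring
    _ ≤ (p - 1) * b * (ξ ^ (-β) * c ^ ((β - 3) / 2)) := by
        apply mul_le_mul_of_nonneg_left hT (by nlinarith)
    _ = (p - 1) * b * ξ ^ (-β) * c ^ ((β - 3) / 2) := by ring
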